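/- For every real number a with 0 < a < 1 and every natural number Q, ∑_{q=0}^{Q−1} a^q √(q+1) ≤ (1/(1 − a)) · (1 + √π/(2√(−ln a))), and this quantity is at most 2/(1 − a)^{3/2}. -/

import Mathlib

open Finset MeasureTheory Set

-- geometric sum bound
private lemma geom_le' (a : ℝ) (ha0 : 0 ≤ a) (ha1 : a < 1) (n : ℕ) :
    ∑ i ∈ Finset.range n, a ^ i ≤ 1 / (1 - a) := by
  have hb : 0 < 1 - a := by linarith
  rw [geom_sum_eq (ne_of_lt ha1)]
  have h : (a ^ n - 1) / (a - 1) = (1 - a ^ n) / (1 - a) := by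
    rw [← neg_div_neg_eq]; ring_nf
  rw [h]
  exact div_le_div₀ zero_le_one (by nlinarith [pow_nonneg ha0 n]) hb le_rfl

-- tail geometric bound
private lemma tail_geom (a : ℝ) (ha0 : 0 ≤ a) (ha1 : a < 1) (j Q : ℕ) :
    ∑ q ∈ Finset.Ico (j + 1) Q, a ^ q ≤ a ^ (j + 1) * (1 / (1 - a)) := by
  rw [Finset.sum_Ico_eq_sum_range]
  simp_rw [pow_add, ← Finset.mul_sum]
  exact mul_le_mul_of_nonneg_left (geom_le' a ha0 ha1 _) (by positivity)

-- triangular sum swap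
private lemma tri_swap (Q : ℕ) (g : ℕ → ℕ → ℝ) :
    ∑ q ∈ Finset.range Q, ∑ j ∈ Finset.range q, g j q
      = ∑ j ∈ Finset.range Q, ∑ q ∈ Finset.Ico (j + 1) Q, g j q := by
  induction Q with
  | zero => simp
  | succ Q ih =>
    rw [Finset.sum_range_succ, ih, Finset.sum_range_succ]
    have h1 : ∀ j ∈ Finset.range Q,
        ∑ q ∈ Finset.Ico (j + 1) (Q + 1), g j q
          = ∑ q ∈ Finset.Ico (j + 1) Q, g j q + g j Q := by
      intro j hj
      rw [Finset.sum_Ico_succ_top (Finset.mem_range.mp hj)]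
    rw [Finset.sum_congr rfl h1, Finset.sum_add_distrib]
    simp

private lemma g_integrableOn (c : ℝ) (hc : 0 < c) :
    IntegrableOn (fun t : ℝ => t ^ (-(1:ℝ)/2) * Real.exp (-(c * t))) (Ioi 0) := by
  have h := integrableOn_rpow_mul_exp_neg_mul_rpow
    (p := 1) (s := -(1:ℝ)/2) (b := c) (by norm_num) (by norm_num) hc
  simpa [Real.rpow_one, neg_mul] using h

private lemma g_integral (c : ℝ) (hc : 0 < c) :
    ∫ t in Ioi (0:ℝ), t ^ (-(1:ℝ)/2) * Real.exp (-(c * t))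
      = Real.sqrt Real.pi / Real.sqrt c := by
  have h := Real.integral_rpow_mul_exp_neg_mul_Ioi (a := (1:ℝ)/2) (r := c) (by norm_num) hc
  rw [show (1:ℝ)/2 - 1 = -(1:ℝ)/2 by norm_num] at h
  rw [h, Real.Gamma_one_half_eq, ← Real.sqrt_eq_rpow, one_div, Real.sqrt_inv]
  ring

private lemma term_le (c : ℝ) (hc : 0 < c) (j : ℕ) :
    ((j:ℝ)+1) ^ (-(1:ℝ)/2) * Real.exp (-(c * ((j:ℝ)+1)))
      ≤ ∫ t in Ioc (j:ℝ) ((j:ℝ)+1), t ^ (-(1:ℝ)/2) * Real.exp (-(c * t)) := by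
  have hsub : Ioc (j:ℝ) ((j:ℝ)+1) ⊆ Ioi 0 := fun t ht =>
    lt_of_le_of_lt (Nat.cast_nonneg j) ht.1
  have hInt : IntegrableOn (fun t : ℝ => t ^ (-(1:ℝ)/2) * Real.exp (-(c*t)))
      (Ioc (j:ℝ) ((j:ℝ)+1)) := (g_integrableOn c hc).mono_set hsub
  have hconst : ∫ _ in Ioc (j:ℝ) ((j:ℝ)+1),
      (((j:ℝ)+1) ^ (-(1:ℝ)/2) * Real.exp (-(c * ((j:ℝ)+1))))
        = ((j:ℝ)+1) ^ (-(1:ℝ)/2) * Real.exp (-(c * ((j:ℝ)+1))) := by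
    rw [setIntegral_const, Real.volume_real_Ioc]
    simp
  rw [← hconst]
  refine setIntegral_mono_on ((integrableOn_const_iff).mpr (Or.inr measure_Ioc_lt_top)) hInt
    measurableSet_Ioc (fun t ht => ?_)
  have ht0 : 0 < t := hsub ht
  have h1 : ((j:ℝ)+1) ^ (-(1:ℝ)/2) ≤ t ^ (-(1:ℝ)/2) :=
    Real.rpow_le_rpow_of_nonpos ht0 ht.2 (by norm_num)
  have h2 : Real.exp (-(c * ((j:ℝ)+1))) ≤ Real.exp (-(c * t)) := by
    apply Real.exp_le_exp.mpr
    nlinarith [ht.2]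
  exact mul_le_mul h1 h2 (Real.exp_nonneg _) (Real.rpow_nonneg ht0.le _)

private lemma sum_le_int (c : ℝ) (hc : 0 < c) (Q : ℕ) :
    ∑ j ∈ Finset.range Q, ((j:ℝ)+1) ^ (-(1:ℝ)/2) * Real.exp (-(c * ((j:ℝ)+1)))
      ≤ Real.sqrt Real.pi / Real.sqrt c := by
  have hII : ∀ k : ℕ, IntervalIntegrable
      (fun t : ℝ => t ^ (-(1:ℝ)/2) * Real.exp (-(c * t))) volume (k:ℝ) ((k:ℝ)+1) := by
    intro k
    rw [intervalIntegrable_iff_integrableOn_Ioc_of_le (by linarith)]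
    exact (g_integrableOn c hc).mono_set
      (fun t ht => lt_of_le_of_lt (Nat.cast_nonneg k) ht.1)
  calc ∑ j ∈ Finset.range Q, ((j:ℝ)+1) ^ (-(1:ℝ)/2) * Real.exp (-(c * ((j:ℝ)+1)))
      ≤ ∑ j ∈ Finset.range Q,
          ∫ t in Ioc (j:ℝ) ((j:ℝ)+1), t ^ (-(1:ℝ)/2) * Real.exp (-(c * t)) :=
        Finset.sum_le_sum (fun j _ => term_le c hc j)
    _ = ∑ j ∈ Finset.range Q,
          ∫ t in (j:ℝ)..((j:ℝ)+1), t ^ (-(1:ℝ)/2) * Real.exp (-(c * t)) := by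
        refine Finset.sum_congr rfl fun j _ => ?_
        rw [intervalIntegral.integral_of_le (by linarith)]
    _ = ∫ t in (0:ℝ)..(Q:ℝ), t ^ (-(1:ℝ)/2) * Real.exp (-(c * t)) := by
        have := intervalIntegral.sum_integral_adjacent_intervals
          (a := fun k : ℕ => (k:ℝ)) (n := Q)
          (f := fun t : ℝ => t ^ (-(1:ℝ)/2) * Real.exp (-(c * t)))
          (μ := volume) (fun k _ => by push_cast; exact hII k)
        push_cast at this ⊢
        convert this using 2 <;> push_cast <;> ring_nf
    _ = ∫ t in Ioc (0:ℝ) (Q:ℝ), t ^ (-(1:ℝ)/2) * Real.exp (-(c * t)) :=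
        intervalIntegral.integral_of_le (Nat.cast_nonneg Q)
    _ ≤ ∫ t in Ioi (0:ℝ), t ^ (-(1:ℝ)/2) * Real.exp (-(c * t)) := by
        refine setIntegral_mono_set (g_integrableOn c hc) ?_
          (HasSubset.Subset.eventuallyLE Ioc_subset_Ioi_self)
        filter_upwards [ae_restrict_mem measurableSet_Ioi] with t ht
        exact mul_nonneg (Real.rpow_nonneg (le_of_lt ht) _) (Real.exp_nonneg _)
    _ = Real.sqrt Real.pi / Real.sqrt c := g_integral c hc

/-- Sum of a geometric term times a square root: for `0 < a < 1` and `Q : ℕ`,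
`∑_{q=0}^{Q−1} a^q √(q+1) ≤ (1/(1−a))(1 + √π/(2√(−ln a))) ≤ 2/(1−a)^{3/2}`. -/
theorem sum_geom_sqrt (a : ℝ) (ha0 : 0 < a) (ha1 : a < 1) (Q : ℕ) :
    (∑ q ∈ Finset.range Q, a ^ q * Real.sqrt (q + 1))
        ≤ (1 / (1 - a)) * (1 + Real.sqrt Real.pi / (2 * Real.sqrt (-Real.log a)))
      ∧ (1 / (1 - a)) * (1 + Real.sqrt Real.pi / (2 * Real.sqrt (-Real.log a)))
        ≤ 2 / (1 - a) ^ ((3 : ℝ) / 2) := by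
  have hb : 0 < 1 - a := by linarith
  have hla : Real.log a < 0 := Real.log_neg ha0 ha1
  set c := -Real.log a with hcdef
  have hc : 0 < c := by rw [hcdef]; linarith
  have hexp : ∀ j : ℕ, a ^ (j + 1) = Real.exp (-(c * ((j:ℝ) + 1))) := by
    intro j
    rw [hcdef, show -(-Real.log a * ((j:ℝ) + 1)) = ((j:ℝ) + 1) * Real.log a by ring]
    rw [show ((j:ℝ) + 1) = ((j + 1 : ℕ) : ℝ) by push_cast; ring]
    rw [Real.exp_nat_mul, Real.exp_log ha0]
  set d : ℕ → ℝ := fun j => Real.sqrt ((j:ℝ) + 1 + 1) - Real.sqrt ((j:ℝ) + 1) with hd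
  have hd0 : ∀ j : ℕ, 0 ≤ d j := fun j =>
    sub_nonneg.mpr (Real.sqrt_le_sqrt (by linarith))
  have hdle : ∀ j : ℕ, d j ≤ 1 / (2 * Real.sqrt ((j:ℝ) + 1)) := by
    intro j
    have hu0 : 0 < Real.sqrt ((j:ℝ) + 1) := Real.sqrt_pos.mpr (by positivity)
    have hu2 : Real.sqrt ((j:ℝ) + 1) ^ 2 = (j:ℝ) + 1 := Real.sq_sqrt (by positivity)
    have hv2 : Real.sqrt ((j:ℝ) + 1 + 1) ^ 2 = (j:ℝ) + 1 + 1 := Real.sq_sqrt (by positivity)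
    have hv0 : 0 ≤ Real.sqrt ((j:ℝ) + 1 + 1) := Real.sqrt_nonneg _
    show Real.sqrt ((j:ℝ) + 1 + 1) - Real.sqrt ((j:ℝ) + 1) ≤ _
    rw [le_div_iff₀ (by positivity)]
    nlinarith [sq_nonneg (Real.sqrt ((j:ℝ) + 1 + 1) - Real.sqrt ((j:ℝ) + 1))]
  have hsq : ∀ q : ℕ, Real.sqrt ((q:ℝ) + 1) = 1 + ∑ j ∈ Finset.range q, d j := by
    intro q
    have h := Finset.sum_range_sub (f := fun j : ℕ => Real.sqrt ((j:ℝ) + 1)) q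
    push_cast at h
    norm_num [Real.sqrt_one] at h
    rw [hd]
    rw [Finset.sum_sub_distrib]
    linarith [h]
  have main1 : (∑ q ∈ Finset.range Q, a ^ q * Real.sqrt (q + 1))
      ≤ (1 / (1 - a)) * (1 + Real.sqrt Real.pi / (2 * Real.sqrt c)) := by
    calc ∑ q ∈ Finset.range Q, a ^ q * Real.sqrt ((q:ℝ) + 1)
        = ∑ q ∈ Finset.range Q, (a ^ q + ∑ j ∈ Finset.range q, a ^ q * d j) := by
          refine Finset.sum_congr rfl fun q _ => ?_
          rw [hsq q, mul_add, mul_one, Finset.mul_sum]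
      _ = ∑ q ∈ Finset.range Q, a ^ q
            + ∑ q ∈ Finset.range Q, ∑ j ∈ Finset.range q, a ^ q * d j :=
          Finset.sum_add_distrib
      _ = ∑ q ∈ Finset.range Q, a ^ q
            + ∑ j ∈ Finset.range Q, d j * ∑ q ∈ Finset.Ico (j + 1) Q, a ^ q := by
          rw [tri_swap Q (fun j q => a ^ q * d j)]
          congr 1
          refine Finset.sum_congr rfl fun j _ => ?_
          rw [← Finset.sum_mul, mul_comm]
      _ ≤ 1 / (1 - a)
            + ∑ j ∈ Finset.range Q, d j * (a ^ (j + 1) * (1 / (1 - a))) := by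
          refine add_le_add (geom_le' a ha0.le ha1 Q) (Finset.sum_le_sum fun j _ => ?_)
          exact mul_le_mul_of_nonneg_left (tail_geom a ha0.le ha1 j Q) (hd0 j)
      _ ≤ 1 / (1 - a)
            + ∑ j ∈ Finset.range Q,
                (1 / (2 * Real.sqrt ((j:ℝ) + 1))) * (a ^ (j + 1) * (1 / (1 - a))) := by
          refine add_le_add le_rfl (Finset.sum_le_sum fun j _ => ?_)
          exact mul_le_mul_of_nonneg_right (hdle j) (by positivity)
      _ = 1 / (1 - a) + (1 / (1 - a)) * (1 / 2)
            * ∑ j ∈ Finset.range Q,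
                ((j:ℝ) + 1) ^ (-(1:ℝ)/2) * Real.exp (-(c * ((j:ℝ) + 1))) := by
          rw [Finset.mul_sum]
          congr 1
          refine Finset.sum_congr rfl fun j _ => ?_
          rw [← hexp j,
            show (-(1:ℝ)/2) = -((1:ℝ)/2) by norm_num,
            Real.rpow_neg (by positivity), ← Real.sqrt_eq_rpow]
          have hu0 : Real.sqrt ((j:ℝ) + 1) ≠ 0 :=
            ne_of_gt (Real.sqrt_pos.mpr (by positivity))
          field_simp
      _ ≤ 1 / (1 - a) + (1 / (1 - a)) * (1 / 2)
            * (Real.sqrt Real.pi / Real.sqrt c) := by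
          refine add_le_add le_rfl (mul_le_mul_of_nonneg_left (sum_le_int c hc Q) ?_)
          positivity
      _ = (1 / (1 - a)) * (1 + Real.sqrt Real.pi / (2 * Real.sqrt c)) := by
          ring
  refine ⟨main1, ?_⟩
  -- Part 2
  have hcb : 1 - a ≤ c := by
    have := Real.log_le_sub_one_of_pos ha0
    rw [hcdef]; linarith
  have hsb0 : 0 < Real.sqrt (1 - a) := Real.sqrt_pos.mpr hb
  have hsb : Real.sqrt (1 - a) ≤ Real.sqrt c := Real.sqrt_le_sqrt hcb
  have hpi : Real.sqrt Real.pi ≤ 2 := by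
    rw [show (2:ℝ) = Real.sqrt 4 by
      rw [show (4:ℝ) = 2 ^ 2 by norm_num, Real.sqrt_sq (by norm_num)]]
    exact Real.sqrt_le_sqrt (by linarith [Real.pi_le_four])
  have hb1 : Real.sqrt (1 - a) ≤ 1 := Real.sqrt_le_one.mpr (by linarith)
  have hrw : (1 - a) ^ ((3:ℝ)/2) = (1 - a) * Real.sqrt (1 - a) := by
    rw [show (3:ℝ)/2 = 1 + 1/2 by norm_num, Real.rpow_add hb, Real.rpow_one,
      ← Real.sqrt_eq_rpow]
  calc (1 / (1 - a)) * (1 + Real.sqrt Real.pi / (2 * Real.sqrt c))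
      ≤ (1 / (1 - a)) * (1 + Real.sqrt Real.pi / (2 * Real.sqrt (1 - a))) := by
        gcongr
    _ ≤ 2 / (1 - a) ^ ((3:ℝ)/2) := by
        rw [hrw, div_mul_eq_mul_div, one_mul,
          div_le_div_iff₀ hb (by positivity)]
        have hs0 : Real.sqrt (1 - a) ≠ 0 := ne_of_gt hsb0
        have expand : (1 + Real.sqrt Real.pi / (2 * Real.sqrt (1 - a)))
            * ((1 - a) * Real.sqrt (1 - a))
            = (1 - a) * Real.sqrt (1 - a) + Real.sqrt Real.pi * (1 - a) / 2 := by
          field_simp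
        rw [expand]
        nlinarith [Real.sqrt_nonneg Real.pi]
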